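/- The sequence z(k) = 1 - (1/2)·exp(-iπ/k)·(1 + (1 - 4·exp(iπ/k))^(1/2)), indexed by positive integers k ≥ 2, converges to 1/2 + i·√3/2 as k → ∞. -/

import Mathlib

open Complex Real Filter

/-- The Gies.3 root series (4.1) converges to the regular ideal simplex
parameter `1/2 + i·√3/2` as `k → ∞`. -/
theorem gies3_root_tendsto (z : ℕ → ℂ)
    (hz : ∀ k : ℕ, 2 ≤ k →
      z k = 1 - (1 / 2) * Complex.exp (-(Real.pi * Complex.I) / (k : ℂ)) *
        (1 + (1 - 4 * Complex.exp (Real.pi * Complex.I / (k : ℂ))) ^ ((1 : ℂ) / 2))) :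
    Tendsto z atTop (nhds (1 / 2 + Complex.I * (Real.sqrt 3 / 2 : ℝ))) := by
  have hπ := Real.pi_pos
  -- (1/k : ℂ) → 0
  have hk0 : Tendsto (fun k : ℕ => ((k : ℂ))⁻¹) atTop (nhds 0) := by
    have h1 : Tendsto (fun k : ℕ => ((k : ℝ))⁻¹) atTop (nhds 0) :=
      tendsto_inv_atTop_zero.comp tendsto_natCast_atTop_atTop
    have h2 := (Complex.continuous_ofReal.tendsto 0).comp h1
    simpa [Function.comp_def] using h2
  have hdiv : ∀ c : ℂ, Tendsto (fun k : ℕ => c / (k : ℂ)) atTop (nhds 0) := by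
    intro c
    have := hk0.const_mul c
    simpa [div_eq_mul_inv] using this
  have hexp1 : Tendsto (fun k : ℕ => Complex.exp ((Real.pi : ℂ) * Complex.I / (k : ℂ)))
      atTop (nhds 1) := by
    have := (Complex.continuous_exp.tendsto 0).comp (hdiv ((Real.pi : ℂ) * Complex.I))
    simpa [Function.comp_def] using this
  have hexp2 : Tendsto (fun k : ℕ => Complex.exp (-((Real.pi : ℂ) * Complex.I) / (k : ℂ)))
      atTop (nhds 1) := by
    have := (Complex.continuous_exp.tendsto 0).comp (hdiv (-((Real.pi : ℂ) * Complex.I)))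
    simpa [Function.comp_def] using this
  set w : ℕ → ℂ := fun k => 1 - 4 * Complex.exp ((Real.pi : ℂ) * Complex.I / (k : ℂ)) with hw
  have hwt : Tendsto w atTop (nhds (-3)) := by
    have := (tendsto_const_nhds : Tendsto (fun _ : ℕ => (1 : ℂ)) atTop (nhds 1)).sub
      (hexp1.const_mul 4)
    norm_num at this
    convert this using 2
  -- im (w k) < 0 for k ≥ 2
  have him : ∀ k : ℕ, 2 ≤ k → (w k).im < 0 := by
    intro k hk
    have hk' : (0 : ℝ) < k := by positivity
    have harg : (Real.pi : ℂ) * Complex.I / (k : ℂ) = ((Real.pi / k : ℝ) : ℂ) * Complex.I := by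
      push_cast
      ring
    have hsin : 0 < Real.sin (Real.pi / k) := by
      apply Real.sin_pos_of_pos_of_lt_pi
      · positivity
      · have hk1 : (1 : ℝ) < k := by exact_mod_cast Nat.lt_of_lt_of_le one_lt_two hk
        rw [div_lt_iff₀ hk']
        nlinarith [hπ, hk1]
    have : (w k).im = -(4 * Real.sin (Real.pi / k)) := by
      rw [hw]
      simp only [harg, Complex.sub_im, Complex.one_im, Complex.mul_im,
        Complex.exp_ofReal_mul_I_im, Complex.exp_ofReal_mul_I_re]
      norm_num
    rw [this]
    linarith
  -- w k → -3 within {im < 0}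
  have hwt' : Tendsto w atTop (nhdsWithin (-3) { z : ℂ | z.im < 0 }) := by
    rw [tendsto_nhdsWithin_iff]
    refine ⟨hwt, ?_⟩
    filter_upwards [eventually_ge_atTop 2] with k hk
    exact him k hk
  -- log (w k) → Real.log 3 - π I
  have hlog : Tendsto (fun k => Complex.log (w k)) atTop
      (nhds ((Real.log 3 : ℂ) - Real.pi * Complex.I)) := by
    have h3 : ((-3 : ℂ)).re < 0 := by norm_num
    have h4 : ((-3 : ℂ)).im = 0 := by norm_num
    have := (Complex.tendsto_log_nhdsWithin_im_neg_of_re_neg_of_im_zero h3 h4).comp hwt'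
    simpa [Function.comp_def] using this
  -- (w k)^(1/2) → -√3 * I
  have hsqrt : Tendsto (fun k => Complex.exp (Complex.log (w k) * (1 / 2))) atTop
      (nhds (-(Real.sqrt 3 : ℂ) * Complex.I)) := by
    have := (Complex.continuous_exp.tendsto _).comp (hlog.mul_const (1 / 2 : ℂ))
    have hval : Complex.exp (((Real.log 3 : ℂ) - Real.pi * Complex.I) * (1 / 2))
        = -(Real.sqrt 3 : ℂ) * Complex.I := by
      have harg : ((Real.log 3 : ℂ) - Real.pi * Complex.I) * (1 / 2)
          = ((Real.log 3 / 2 : ℝ) : ℂ) + ((-(Real.pi / 2) : ℝ) : ℂ) * Complex.I := by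
        push_cast; ring
      rw [harg, Complex.exp_add, Complex.exp_mul_I, ← Complex.ofReal_exp, ← Complex.ofReal_cos, ← Complex.ofReal_sin]
      have hs : Real.exp (Real.log 3 / 2) = Real.sqrt 3 := by
        rw [Real.sqrt_eq_rpow, Real.rpow_def_of_pos (by norm_num : (0:ℝ) < 3)]
        ring_nf
      rw [hs, Real.cos_neg, Real.sin_neg, Real.cos_pi_div_two, Real.sin_pi_div_two]
      push_cast
      ring
    rw [← hval]
    exact this
  -- assemble
  have hmain : Tendsto (fun k : ℕ => 1 - (1 / 2 : ℂ) *
      Complex.exp (-((Real.pi : ℂ) * Complex.I) / (k : ℂ)) *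
      (1 + Complex.exp (Complex.log (w k) * (1 / 2)))) atTop
      (nhds (1 / 2 + Complex.I * (Real.sqrt 3 / 2 : ℝ))) := by
    have := (tendsto_const_nhds : Tendsto (fun _ : ℕ => (1 : ℂ)) atTop (nhds 1)).sub
      (((hexp2.const_mul (1 / 2 : ℂ))).mul
        ((tendsto_const_nhds : Tendsto (fun _ : ℕ => (1 : ℂ)) atTop (nhds 1)).add hsqrt))
    convert this using 2
    push_cast
    ring
  refine hmain.congr' ?_
  filter_upwards [eventually_ge_atTop 2] with k hk
  have hne : w k ≠ 0 := by
    intro h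
    have := him k hk
    rw [h] at this
    simp at this
  rw [hz k hk]
  rw [Complex.cpow_def_of_ne_zero hne]
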